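/- (Logarithmic regret divergence for the one-fair-coin bandit.) Fix θ ∈ (1/2,1). For γ ∈ (0,1) let D = 1 − 4γ²θ(1−θ), ζ_−(γ) = ln((1 − √D)/(2γθ)) / ln((1−θ)/θ), β_c(γ) = −1/(2ζ_−(γ) − 1), and define the regret of the analytic solution at the uniform belief by R(γ) = (2θ−1)/(4(1−γ)) + (β_c(γ)(2θ−1)/(2(1−γ))) · ( (1−β_c(γ))^{ζ_−(γ)} (1+β_c(γ))^{1−ζ_−(γ)} )^{−1}. Then lim_{γ→1⁻} R(γ) / ln(1/(1−γ)) = 1 / (4 ln(θ/(1−θ))). In particular the regret diverges logarithmically in the effective horizon 1/(1−γ). -/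

import Mathlib

/-!
Logarithmic regret divergence for the one-fair-coin two-state Bernoulli
bandit.  With `D = 1 − 4γ²θ(1−θ)`,
`ζ_−(γ) = ln((1 − √D)/(2γθ)) / ln((1−θ)/θ)`,
`β_c(γ) = −1/(2ζ_−(γ) − 1)` and regret of the analytic solution at the
uniform belief
`R(γ) = (2θ−1)/(4(1−γ))
        + (β_c(2θ−1)/(2(1−γ))) ((1−β_c)^{ζ_−}(1+β_c)^{1−ζ_−})⁻¹`,
one has `R(γ)/ln(1/(1−γ)) → 1/(4 ln(θ/(1−θ)))` as `γ → 1⁻`.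
-/

/-- The discriminant `D = 1 − 4γ²θ(1−θ)`. -/
noncomputable def Dq (θ γ : ℝ) : ℝ := 1 - 4 * γ ^ 2 * θ * (1 - θ)

/-- The exponent `ζ_−(γ) = ln((1 − √D)/(2γθ)) / ln((1−θ)/θ)`. -/
noncomputable def zetaMinus (θ γ : ℝ) : ℝ :=
  Real.log ((1 - Real.sqrt (Dq θ γ)) / (2 * γ * θ)) / Real.log ((1 - θ) / θ)

/-- The decision boundary `β_c(γ) = −1/(2ζ_−(γ) − 1)`. -/
noncomputable def betaC (θ γ : ℝ) : ℝ := -1 / (2 * zetaMinus θ γ - 1)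

/-- Regret of the analytic solution of the one-fair-coin bandit at the
uniform belief `β = 0`. -/
noncomputable def Rfc (θ γ : ℝ) : ℝ :=
  (2 * θ - 1) / (4 * (1 - γ))
    + (betaC θ γ * (2 * θ - 1) / (2 * (1 - γ)))
      * ((1 - betaC θ γ) ^ zetaMinus θ γ
          * (1 + betaC θ γ) ^ (1 - zetaMinus θ γ))⁻¹

section Aux
open Real Filter
noncomputable def uu (δ : ℝ) : ℝ := δ * Real.log δ - (1+δ) * Real.log (1+δ)

lemma xlogx_tendsto : Tendsto (fun δ : ℝ => δ * Real.log δ) (nhdsWithin 0 (Set.Ioi 0)) (nhds 0) := by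
  have h := tendsto_log_mul_rpow_nhdsGT_zero (zero_lt_one)
  simp only [Real.rpow_one] at h
  exact h.congr fun x => mul_comm _ _

lemma uu_tendsto : Tendsto uu (nhdsWithin 0 (Set.Ioi 0)) (nhds 0) := by
  have h2 : Tendsto (fun δ : ℝ => (1+δ) * Real.log (1+δ)) (nhdsWithin 0 (Set.Ioi 0)) (nhds 0) := by
    have hc : ContinuousAt (fun δ : ℝ => (1+δ) * Real.log (1+δ)) 0 := by
      have hl : ContinuousAt (fun δ : ℝ => Real.log (1+δ)) 0 :=
        (Real.continuousAt_log (by norm_num)).comp (continuousAt_const.add continuousAt_id)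
      exact (continuousAt_const.add continuousAt_id).mul hl
    have h5 : Tendsto (fun δ : ℝ => (1+δ) * Real.log (1+δ)) (nhdsWithin 0 (Set.Ioi 0)) (nhds ((1+0) * Real.log (1+0))) :=
      hc.tendsto.mono_left nhdsWithin_le_nhds
    simpa using h5
  have := xlogx_tendsto.sub h2
  rw [sub_zero] at this
  exact this

lemma uu_neg {δ : ℝ} (h0 : 0 < δ) (h1 : δ < 1) : uu δ < 0 := by
  have l1 : Real.log δ < 0 := Real.log_neg h0 h1
  have l2 : 0 < Real.log (1+δ) := Real.log_pos (by linarith)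
  have h3 : δ * Real.log δ < 0 := mul_neg_of_pos_of_neg h0 l1
  have h4 : (0:ℝ) < (1+δ) * Real.log (1+δ) := mul_pos (by linarith) l2
  unfold uu; nlinarith

lemma exp_factor_tendsto : Tendsto (fun δ : ℝ => (Real.exp (uu δ) - 1) / uu δ)
    (nhdsWithin 0 (Set.Ioi 0)) (nhds 1) := by
  have hslope : Tendsto (slope Real.exp 0) (nhdsWithin 0 {0}ᶜ) (nhds 1) := by
    have := hasDerivAt_iff_tendsto_slope.mp (Real.hasDerivAt_exp 0)
    simpa using this
  have hu : Tendsto uu (nhdsWithin 0 (Set.Ioi 0)) (nhdsWithin 0 {0}ᶜ) := by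
    rw [tendsto_nhdsWithin_iff]
    refine ⟨uu_tendsto, ?_⟩
    filter_upwards [Ioo_mem_nhdsGT_of_mem (by norm_num : (0:ℝ) ∈ Set.Ico 0 1)] with δ hδ
    exact ne_of_lt (uu_neg hδ.1 hδ.2)
  have := hslope.comp hu
  refine this.congr fun δ => ?_
  simp [slope_def_field, Function.comp]

lemma log1p_factor : Tendsto (fun δ : ℝ => Real.log (1+δ) / δ)
    (nhdsWithin 0 (Set.Ioi 0)) (nhds 1) := by
  have hslope : Tendsto (slope Real.log 1) (nhdsWithin 1 {1}ᶜ) (nhds 1) := by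
    have := hasDerivAt_iff_tendsto_slope.mp (Real.hasDerivAt_log (one_ne_zero))
    simpa using this
  have hmap : Tendsto (fun δ : ℝ => 1 + δ) (nhdsWithin 0 (Set.Ioi 0)) (nhdsWithin 1 {1}ᶜ) := by
    rw [tendsto_nhdsWithin_iff]
    constructor
    · have : Tendsto (fun δ : ℝ => 1 + δ) (nhds 0) (nhds 1) := by
        simpa using (tendsto_const_nhds.add tendsto_id : Tendsto (fun δ : ℝ => 1 + δ) (nhds 0) (nhds (1+0)))
      exact this.mono_left nhdsWithin_le_nhds
    · filter_upwards [self_mem_nhdsWithin] with δ hδ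
      simp only [Set.mem_compl_iff, Set.mem_singleton_iff]
      intro h
      have : δ = 0 := by linarith
      exact absurd this (ne_of_gt hδ)
  have := hslope.comp hmap
  refine this.congr fun δ => ?_
  simp [slope_def_field, Function.comp, Real.log_one]

lemma u_ratio_tendsto : Tendsto (fun δ : ℝ => uu δ / (δ * Real.log δ))
    (nhdsWithin 0 (Set.Ioi 0)) (nhds 1) := by
  have hinv : Tendsto (fun δ : ℝ => (Real.log δ)⁻¹) (nhdsWithin 0 (Set.Ioi 0)) (nhds 0) := by
    have h := tendsto_neg_atBot_atTop.comp Real.tendsto_log_nhdsGT_zero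
    have h2 := h.inv_tendsto_atTop.neg
    rw [neg_zero] at h2
    refine h2.congr fun δ => ?_
    simp [Function.comp]
  have h1 : Tendsto (fun δ : ℝ => (1+δ) * (Real.log (1+δ) / δ) * (Real.log δ)⁻¹)
      (nhdsWithin 0 (Set.Ioi 0)) (nhds 0) := by
    have ha : Tendsto (fun δ : ℝ => (1:ℝ)+δ) (nhdsWithin 0 (Set.Ioi 0)) (nhds 1) := by
      have : Tendsto (fun δ : ℝ => 1 + δ) (nhds 0) (nhds 1) := by
        simpa using (tendsto_const_nhds.add tendsto_id : Tendsto (fun δ : ℝ => 1 + δ) (nhds 0) (nhds (1+0)))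
      exact this.mono_left nhdsWithin_le_nhds
    have := (ha.mul log1p_factor).mul hinv
    simpa using this
  have h2 : Tendsto (fun δ : ℝ => 1 - (1+δ) * (Real.log (1+δ) / δ) * (Real.log δ)⁻¹)
      (nhdsWithin 0 (Set.Ioi 0)) (nhds 1) := by
    have := (tendsto_const_nhds (x := (1:ℝ))).sub h1
    simpa using this
  refine h2.congr' ?_
  filter_upwards [Ioo_mem_nhdsGT_of_mem (by norm_num : (0:ℝ) ∈ Set.Ico 0 1)] with δ hδ
  have hδ0 : δ ≠ 0 := ne_of_gt hδ.1
  have hlog : Real.log δ ≠ 0 := ne_of_lt (Real.log_neg hδ.1 hδ.2)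
  unfold uu
  field_simp

lemma g_tendsto : Tendsto (fun δ : ℝ => (1 - δ ^ δ * (1+δ) ^ (-(1+δ))) / (δ * Real.log (1/δ)))
    (nhdsWithin 0 (Set.Ioi 0)) (nhds 1) := by
  have h := exp_factor_tendsto.mul u_ratio_tendsto
  rw [mul_one] at h
  refine h.congr' ?_
  filter_upwards [Ioo_mem_nhdsGT_of_mem (by norm_num : (0:ℝ) ∈ Set.Ico 0 1)] with δ hδ
  have h0 : 0 < δ := hδ.1
  have h1 : δ < 1 := hδ.2
  have hune : uu δ ≠ 0 := ne_of_lt (uu_neg h0 h1)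
  have hlne : Real.log δ ≠ 0 := ne_of_lt (Real.log_neg h0 h1)
  have hE : δ ^ δ * (1+δ) ^ (-(1+δ)) = Real.exp (uu δ) := by
    rw [Real.rpow_def_of_pos h0, Real.rpow_def_of_pos (by linarith : (0:ℝ) < 1+δ), ← Real.exp_add]
    unfold uu; ring_nf
  rw [hE, one_div, Real.log_inv]
  have hδne : δ ≠ 0 := ne_of_gt h0
  field_simp
  ring

lemma Rfc_eq (θ γ : ℝ) (hγ : γ < 1) (hδ : 0 < zetaMinus θ γ - 1) :
    Rfc θ γ = (2*θ-1)/(4*(1-γ)) * (1 - (zetaMinus θ γ - 1) ^ (zetaMinus θ γ - 1)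
      * (1 + (zetaMinus θ γ - 1)) ^ (-(1 + (zetaMinus θ γ - 1)))) := by
  unfold Rfc betaC
  set ζ := zetaMinus θ γ with hζdef
  set δ := ζ - 1 with hδdef
  have hζδ : ζ = 1 + δ := by rw [hδdef]; ring
  set w : ℝ := 2*ζ - 1 with hw
  have hw1 : 1 < w := by rw [hw]; linarith
  have hw0 : 0 < w := by linarith
  have hwne : w ≠ 0 := ne_of_gt hw0
  have h1δ : (0:ℝ) < 1 + δ := by linarith
  have hb1 : 1 - (-1/w) = (w+1)/w := by field_simp; ring
  have hb2 : 1 + (-1/w) = (w-1)/w := by field_simp; ring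
  rw [hb1, hb2]
  have hP : ((w+1)/w) ^ ζ * ((w-1)/w) ^ (1-ζ) = (w+1)^ζ * (w-1)^(1-ζ) / w := by
    rw [Real.div_rpow (by linarith) hw0.le, Real.div_rpow (by linarith : (0:ℝ) ≤ w-1) hw0.le]
    rw [div_mul_div_comm, ← Real.rpow_add hw0]
    norm_num
  rw [hP]
  have hwp1 : w + 1 = 2*(1+δ) := by rw [hw, hζδ]; ring
  have hwm1 : w - 1 = 2*δ := by rw [hw, hζδ]; ring
  have key : (-1/w) * ((w+1)^ζ * (w-1)^(1-ζ) / w)⁻¹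
      = -(1/2) * (δ ^ δ * (1+δ) ^ (-(1+δ))) := by
    rw [hwp1, hwm1]
    have E1 : ((2:ℝ)*(1+δ)) ^ ζ = Real.exp ((Real.log 2 + Real.log (1+δ)) * ζ) := by
      rw [Real.rpow_def_of_pos (by positivity), Real.log_mul two_ne_zero (ne_of_gt h1δ)]
    have E2 : ((2:ℝ)*δ) ^ (1-ζ) = Real.exp ((Real.log 2 + Real.log δ) * (1-ζ)) := by
      rw [Real.rpow_def_of_pos (by positivity), Real.log_mul two_ne_zero (ne_of_gt hδ)]
    have E3 : δ ^ δ = Real.exp (Real.log δ * δ) := Real.rpow_def_of_pos hδ δ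
    have E4 : (1+δ) ^ (-(1+δ)) = Real.exp (Real.log (1+δ) * (-(1+δ))) :=
      Real.rpow_def_of_pos h1δ _
    rw [E1, E2, E3, E4, ← Real.exp_add, ← Real.exp_add]
    have E5 : (-(1/2):ℝ) * Real.exp (Real.log δ * δ + Real.log (1+δ) * (-(1+δ)))
        = -Real.exp (-Real.log 2 + (Real.log δ * δ + Real.log (1+δ) * (-(1+δ)))) := by
      have h := Real.exp_add (-Real.log 2) (Real.log δ * δ + Real.log (1+δ) * (-(1+δ)))
      rw [h, Real.exp_neg, Real.exp_log two_pos, Real.exp_add]; ring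
    rw [E5]
    have E6 : (-1/w) * (Real.exp ((Real.log 2 + Real.log (1+δ)) * ζ
        + (Real.log 2 + Real.log δ) * (1-ζ)) / w)⁻¹
        = -Real.exp (-((Real.log 2 + Real.log (1+δ)) * ζ + (Real.log 2 + Real.log δ) * (1-ζ))) := by
      rw [Real.exp_neg]; field_simp
    rw [E6, neg_inj, Real.exp_eq_exp, hζδ]
    ring
  have hsplit : (-1/w * (2*θ-1) / (2*(1-γ))) * ((w+1)^ζ * (w-1)^(1-ζ) / w)⁻¹
      = (2*θ-1)/(2*(1-γ)) * ((-1/w) * ((w+1)^ζ * (w-1)^(1-ζ) / w)⁻¹) := by ring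
  rw [hsplit, key]
  have hγne : (1:ℝ) - γ ≠ 0 := ne_of_gt (by linarith)
  field_simp
  ring

lemma zeta_deriv (θ : ℝ) (h2 : 1/2 < θ) (h1 : θ < 1) :
    HasDerivAt (zetaMinus θ) (1 / ((2*θ-1) * Real.log ((1-θ)/θ))) 1 := by
  have hθ0 : (0:ℝ) < θ := by linarith
  have ht : (0:ℝ) < 2*θ-1 := by linarith
  have h1θ : (0:ℝ) < 1-θ := by linarith
  have hD1 : Dq θ 1 = (2*θ-1)^2 := by unfold Dq; ring
  have hsD1 : Real.sqrt (Dq θ 1) = 2*θ-1 := by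
    rw [hD1, Real.sqrt_sq ht.le]
  have hDne : Dq θ 1 ≠ 0 := by rw [hD1]; positivity
  have hd : HasDerivAt (fun γ => Dq θ γ) (-(8*θ*(1-θ))) 1 := by
    have : HasDerivAt (fun γ : ℝ => 1 - 4 * γ ^ 2 * θ * (1 - θ))
        (-(8*θ*(1-θ))) 1 := by
      have := ((hasDerivAt_pow 2 (1:ℝ)).const_mul (4:ℝ)).mul_const (θ*(1-θ))
      have h' := (this.const_add (0:ℝ)).neg.const_add 1
      have e : (fun x : ℝ => 1 + (-fun x => 0 + 4 * x ^ 2 * (θ * (1 - θ))) x) = fun γ => 1 - 4 * γ ^ 2 * θ * (1 - θ) := by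
        funext x; simp; ring
      rw [e] at h'
      exact h'.congr_deriv (by norm_num; ring)
    exact this
  have hs : HasDerivAt (fun γ => Real.sqrt (Dq θ γ))
      (-(8*θ*(1-θ)) / (2 * (2*θ-1))) 1 := by
    have := hd.sqrt hDne
    rwa [hsD1] at this
  have hn : HasDerivAt (fun γ => 1 - Real.sqrt (Dq θ γ))
      (8*θ*(1-θ) / (2 * (2*θ-1))) 1 := by
    have := hs.neg.const_add 1
    exact this.congr_deriv (by ring)
  have hm : HasDerivAt (fun γ : ℝ => 2 * γ * θ) (2*θ) 1 := by
    have := ((hasDerivAt_id (1:ℝ)).const_mul (2:ℝ)).mul_const θ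
    simpa using this
  have hmne : (2 * (1:ℝ) * θ) ≠ 0 := by positivity
  have hx : HasDerivAt (fun γ => (1 - Real.sqrt (Dq θ γ)) / (2 * γ * θ))
      ((8*θ*(1-θ) / (2 * (2*θ-1)) * (2*1*θ) - (1 - Real.sqrt (Dq θ 1)) * (2*θ)) / (2*1*θ)^2) 1 :=
    hn.div hm hmne
  have hx1 : (1 - Real.sqrt (Dq θ 1)) / (2 * 1 * θ) = (1-θ)/θ := by
    rw [hsD1]; field_simp; ring
  have hxne : (1 - Real.sqrt (Dq θ 1)) / (2 * 1 * θ) ≠ 0 := by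
    rw [hx1]; positivity
  have hl : HasDerivAt (fun γ => Real.log ((1 - Real.sqrt (Dq θ γ)) / (2 * γ * θ)))
      (((8*θ*(1-θ) / (2 * (2*θ-1)) * (2*1*θ) - (1 - Real.sqrt (Dq θ 1)) * (2*θ)) / (2*1*θ)^2) / ((1 - Real.sqrt (Dq θ 1)) / (2 * 1 * θ))) 1 :=
    hx.log hxne
  have hval : (((8*θ*(1-θ) / (2 * (2*θ-1)) * (2*1*θ) - (1 - Real.sqrt (Dq θ 1)) * (2*θ)) / (2*1*θ)^2) / ((1 - Real.sqrt (Dq θ 1)) / (2 * 1 * θ))) = 1/(2*θ-1) := by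
    rw [hsD1]
    have e1 : (2:ℝ)*(2*θ-1) ≠ 0 := by positivity
    have e2 : (2*(1:ℝ)*θ) ≠ 0 := by positivity
    have e3 : (2*θ-1) ≠ 0 := ne_of_gt ht
    have e4 : (1-θ) ≠ 0 := ne_of_gt h1θ
    field_simp
    have e5 : θ*2-1 ≠ 0 := by linarith
    have e6 : 1-(θ*2-1) ≠ 0 := by linarith
    field_simp
    ring
  rw [hval] at hl
  have := hl.div_const (Real.log ((1-θ)/θ))
  exact this.congr_deriv (by rw [div_div])


end Aux

open Real Filter in
theorem one_fair_coin_logarithmic_regret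
    (θ : ℝ) (hθ : θ ∈ Set.Ioo (1 / 2 : ℝ) 1) :
    Filter.Tendsto (fun γ => Rfc θ γ / Real.log (1 / (1 - γ)))
      (nhdsWithin 1 (Set.Iio (1 : ℝ)))
      (nhds (1 / (4 * Real.log (θ / (1 - θ))))) := by
  obtain ⟨h2, h1⟩ := hθ
  have hθ0 : (0:ℝ) < θ := by linarith
  have ht : (0:ℝ) < 2*θ-1 := by linarith
  have h1θ : (0:ℝ) < 1-θ := by linarith
  set L := Real.log (θ/(1-θ)) with hL
  have hLpos : 0 < L := Real.log_pos (by rw [lt_div_iff₀ h1θ]; linarith)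
  have hrL : Real.log ((1-θ)/θ) = -L := by
    rw [hL, ← Real.log_inv]
    congr 1
    field_simp
  have hrne : Real.log ((1-θ)/θ) ≠ 0 := by rw [hrL]; exact neg_ne_zero.mpr (ne_of_gt hLpos)
  have hsD1 : Real.sqrt (Dq θ 1) = 2*θ-1 := by
    rw [show Dq θ 1 = (2*θ-1)^2 by unfold Dq; ring, Real.sqrt_sq ht.le]
  have hζ1 : zetaMinus θ 1 = 1 := by
    unfold zetaMinus
    rw [hsD1, show (1 - (2*θ-1)) / (2*1*θ) = (1-θ)/θ by field_simp; ring]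
    exact div_self hrne
  set c := 1/((2*θ-1)*L) with hc
  have hcpos : 0 < c := by rw [hc]; positivity
  set l := nhdsWithin (1:ℝ) (Set.Iio 1) with hldef
  have hlle : l ≤ nhdsWithin (1:ℝ) {(1:ℝ)}ᶜ :=
    nhdsWithin_mono 1 (fun x hx => ne_of_lt hx)
  -- A : difference quotient
  have hA : Tendsto (fun γ => (zetaMinus θ γ - 1)/(1-γ)) l (nhds c) := by
    have hs := (hasDerivAt_iff_tendsto_slope.mp (zeta_deriv θ h2 h1)).mono_left hlle
    have hs2 := hs.neg
    have hcc : -(1 / ((2*θ-1) * Real.log ((1-θ)/θ))) = c := by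
      rw [hrL, hc]
      field_simp
    rw [hcc] at hs2
    refine hs2.congr fun γ => ?_
    rw [slope_def_field, hζ1, ← div_neg, neg_sub]
  -- ε tendsto 0 from the right
  have hε : Tendsto (fun γ : ℝ => 1 - γ) l (nhdsWithin 0 (Set.Ioi 0)) := by
    rw [tendsto_nhdsWithin_iff]
    constructor
    · have hcont : Tendsto (fun γ : ℝ => 1 - γ) (nhds 1) (nhds 0) := by
        have hco : Continuous (fun γ : ℝ => 1 - γ) := continuous_const.sub continuous_id
        have := hco.tendsto (1:ℝ)
        simpa using this
      exact hcont.mono_left nhdsWithin_le_nhds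
    · filter_upwards [self_mem_nhdsWithin] with γ hγ
      exact Set.mem_Ioi.mpr (sub_pos.mpr hγ)
  -- δ tendsto 0 from the right
  have hδ : Tendsto (fun γ => zetaMinus θ γ - 1) l (nhdsWithin 0 (Set.Ioi 0)) := by
    rw [tendsto_nhdsWithin_iff]
    constructor
    · have hm := hA.mul (hε.mono_right nhdsWithin_le_nhds)
      rw [mul_zero] at hm
      refine hm.congr' ?_
      filter_upwards [self_mem_nhdsWithin] with γ hγ
      have hne : (1:ℝ) - γ ≠ 0 := ne_of_gt (sub_pos.mpr hγ)
      field_simp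
    · filter_upwards [hA.eventually (eventually_gt_nhds hcpos), self_mem_nhdsWithin]
        with γ hr hγ
      have hεp : (0:ℝ) < 1 - γ := sub_pos.mpr hγ
      have hp := mul_pos hr hεp
      rw [div_mul_cancel₀ _ (ne_of_gt hεp)] at hp
      exact Set.mem_Ioi.mpr hp
  have hδ0 : ∀ᶠ γ in l, 0 < zetaMinus θ γ - 1 := (tendsto_nhdsWithin_iff.mp hδ).2
  have hδ1 : ∀ᶠ γ in l, zetaMinus θ γ - 1 < 1 :=
    (hδ.mono_right nhdsWithin_le_nhds).eventually (eventually_lt_nhds one_pos)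
  -- G factor
  have hG : Tendsto (fun γ => (1 - (zetaMinus θ γ - 1) ^ (zetaMinus θ γ - 1)
      * (1 + (zetaMinus θ γ - 1)) ^ (-(1 + (zetaMinus θ γ - 1))))
      / ((zetaMinus θ γ - 1) * Real.log (1/(zetaMinus θ γ - 1)))) l (nhds 1) := by
    have := g_tendsto.comp hδ
    exact this
  -- log-ratio factor
  have hεinv : Tendsto (fun γ : ℝ => 1/(1-γ)) l atTop := by
    have := hε.inv_tendsto_nhdsGT_zero
    refine this.congr fun γ => (one_div _).symm
  have hlogtop : Tendsto (fun γ : ℝ => Real.log (1/(1-γ))) l atTop :=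
    Real.tendsto_log_atTop.comp hεinv
  have hlogc : Tendsto (fun γ => Real.log ((zetaMinus θ γ - 1)/(1-γ))) l (nhds (Real.log c)) :=
    (Real.continuousAt_log (ne_of_gt hcpos)).tendsto.comp hA
  have hD : Tendsto (fun γ => Real.log (1/(zetaMinus θ γ - 1)) / Real.log (1/(1-γ)))
      l (nhds 1) := by
    have h0 := hlogc.div_atTop hlogtop
    have h1' := (tendsto_const_nhds : Filter.Tendsto (fun _ : ℝ => (1:ℝ)) l (nhds 1)).sub h0
    rw [sub_zero] at h1'
    refine h1'.congr' ?_
    filter_upwards [hδ0, Ioo_mem_nhdsLT_of_mem (by norm_num : (1:ℝ) ∈ Set.Ioc (0:ℝ) 1)]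
      with γ hd hγ
    have hεp : (0:ℝ) < 1 - γ := sub_pos.mpr hγ.2
    have hε1 : (1:ℝ) - γ < 1 := by linarith [hγ.1]
    have hlogε : Real.log (1-γ) < 0 := Real.log_neg hεp hε1
    have hlogεne : Real.log (1-γ) ≠ 0 := ne_of_lt hlogε
    have hdne : zetaMinus θ γ - 1 ≠ 0 := ne_of_gt hd
    have hεne : (1:ℝ) - γ ≠ 0 := ne_of_gt hεp
    rw [Real.log_div hdne hεne, one_div, one_div, Real.log_inv, Real.log_inv]
    have hgoal : ∀ a b : ℝ, b ≠ 0 → 1 - (a - b)/(-b) = -a / -b := by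
      intro a b hb
      rw [neg_div_neg_eq, div_neg, sub_div, div_self hb, sub_neg_eq_add]
      ring
    exact hgoal _ _ hlogεne
  -- assemble
  have hfinal := (((tendsto_const_nhds : Filter.Tendsto (fun _ : ℝ => (2*θ-1)/4) l (nhds ((2*θ-1)/4))).mul hA).mul hG).mul hD
  have hval : (2*θ-1)/4 * c * 1 * 1 = 1 / (4 * L) := by
    rw [hc]
    field_simp
  rw [hval] at hfinal
  refine hfinal.congr' ?_
  filter_upwards [hδ0, hδ1, Ioo_mem_nhdsLT_of_mem (by norm_num : (1:ℝ) ∈ Set.Ioc (0:ℝ) 1)]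
    with γ hd0 hd1 hγ
  set δ := zetaMinus θ γ - 1 with hδdef
  have hεp : (0:ℝ) < 1 - γ := sub_pos.mpr hγ.2
  have hε1 : (1:ℝ) - γ < 1 := by linarith [hγ.1]
  have hεne : (1:ℝ) - γ ≠ 0 := ne_of_gt hεp
  have hdne : δ ≠ 0 := ne_of_gt hd0
  have hlogδ : Real.log (1/δ) ≠ 0 := by
    rw [one_div, Real.log_inv]
    exact neg_ne_zero.mpr (ne_of_lt (Real.log_neg hd0 hd1))
  have hlogεne : Real.log (1/(1-γ)) ≠ 0 := by
    rw [one_div, Real.log_inv]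
    refine neg_ne_zero.mpr (ne_of_lt (Real.log_neg hεp ?_))
    linarith [hγ.1]
  rw [Rfc_eq θ γ hγ.2 hd0]
  have key : ∀ A dd ee ld le : ℝ, dd ≠ 0 → ld ≠ 0 → ee ≠ 0 → le ≠ 0 →
      (2*θ-1)/4 * (dd/ee) * ((1 - A)/(dd*ld)) * (ld/le)
        = (2*θ-1)/(4*ee) * (1-A) / le := by
    intro A dd ee ld le h1' h2' h3' h4'
    field_simp
  exact key _ _ _ _ _ hdne hlogδ hεne hlogεne
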